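/- Let K ≥ 1, let p_max ∈ ℝ^K with p_max ≥ 0, and let P ⊆ {p ∈ ℝ^K : 0 ≤ p ≤ p_max}. For each k ∈ Fin K let q_k⁺ : ℝ^K → ℝ be arbitrary and ν_k : ℝ^K → ℝ be monotone nondecreasing with respect to the componentwise order. Then p* ∈ P maximizes p ↦ min_{k ∈ Fin K} (q_k⁺(p) − ν_k(p)) over P if and only if the pair (t*, p*) with t* = Σ_{i ∈ Fin K} ν_i(p_max) − Σ_{i ∈ Fin K} ν_i(p*) maximizes (t,p) ↦ min_{k ∈ Fin K} (q_k⁺(p) + Σ_{i ≠ k} ν_i(p)) + t over the lifted set {(t,p) ∈ ℝ × ℝ^K : p ∈ P, t ≥ 0, and t + Σ_{i ∈ Fin K} ν_i(p) ≤ Σ_{i ∈ Fin K} ν_i(p_max)}; moreover, in that case the optimal value of the lifted problem equals the optimal value of the original problem plus the constant Σ_{i ∈ Fin K} ν_i(p_max). -/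

import Mathlib

/-- Minimum of a real-valued function over the nonempty finite index set `Fin K`. -/
noncomputable def finMin {K : ℕ} (hK : 1 ≤ K) (h : Fin K → ℝ) : ℝ :=
  Finset.univ.inf' (Finset.univ_nonempty_iff.mpr (Fin.pos_iff_nonempty.mp hK)) h

/-- `x` maximizes `h` over `D`. -/
def IsMaximizerOn {α : Type*} (h : α → ℝ) (D : Set α) (x : α) : Prop :=
  x ∈ D ∧ ∀ y ∈ D, h y ≤ h x

lemma finMin_add_const {K : ℕ} (hK : 1 ≤ K) (g : Fin K → ℝ) (c : ℝ) :
    finMin hK (fun k => g k + c) = finMin hK g + c := by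
  have H : (Finset.univ : Finset (Fin K)).Nonempty :=
    Finset.univ_nonempty_iff.mpr (Fin.pos_iff_nonempty.mp hK)
  unfold finMin
  apply le_antisymm
  · obtain ⟨k, hk, hkeq⟩ := Finset.exists_mem_eq_inf' H g
    rw [hkeq]
    exact Finset.inf'_le _ (Finset.mem_univ k)
  · apply Finset.le_inf'
    intro k _
    have := Finset.inf'_le (f := g) (Finset.mem_univ k)
    linarith

lemma key_rewrite {K : ℕ} (hK : 1 ≤ K) (qp ν : Fin K → (Fin K → ℝ) → ℝ) (p : Fin K → ℝ) :
    finMin hK (fun k => qp k p + ∑ i ∈ Finset.univ.erase k, ν i p)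
      = finMin hK (fun k => qp k p - ν k p) + ∑ i : Fin K, ν i p := by
  rw [← finMin_add_const]
  congr 1
  funext k
  rw [Finset.sum_erase_eq_sub (Finset.mem_univ k)]
  ring

/-- The lifting underlying Proposition 5 of the paper: the Dinkelbach auxiliary
problem for WMEE maximization as a monotonic problem. -/
theorem wmee_monotonic_lifting {K : ℕ} (hK : 1 ≤ K)
    (pmax : Fin K → ℝ) (hpmax : 0 ≤ pmax)
    (P : Set (Fin K → ℝ)) (hP : P ⊆ {p : Fin K → ℝ | 0 ≤ p ∧ p ≤ pmax})
    (qp ν : Fin K → (Fin K → ℝ) → ℝ)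
    (hν : ∀ k, Monotone (ν k))
    (pstar : Fin K → ℝ) (hpstar : pstar ∈ P) :
    (IsMaximizerOn (fun p => finMin hK (fun k => qp k p - ν k p)) P pstar ↔
      IsMaximizerOn
        (fun x : ℝ × (Fin K → ℝ) =>
          finMin hK (fun k => qp k x.2 + ∑ i ∈ Finset.univ.erase k, ν i x.2) + x.1)
        {x : ℝ × (Fin K → ℝ) | x.2 ∈ P ∧ 0 ≤ x.1 ∧
          x.1 + ∑ i : Fin K, ν i x.2 ≤ ∑ i : Fin K, ν i pmax}
        (∑ i : Fin K, ν i pmax - ∑ i : Fin K, ν i pstar, pstar)) ∧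
    (IsMaximizerOn (fun p => finMin hK (fun k => qp k p - ν k p)) P pstar →
      finMin hK (fun k => qp k pstar + ∑ i ∈ Finset.univ.erase k, ν i pstar) +
          (∑ i : Fin K, ν i pmax - ∑ i : Fin K, ν i pstar) =
        finMin hK (fun k => qp k pstar - ν k pstar) + ∑ i : Fin K, ν i pmax) := by
  have hle : ∀ p ∈ P, (∑ i : Fin K, ν i p) ≤ ∑ i : Fin K, ν i pmax := by
    intro p hp
    exact Finset.sum_le_sum fun i _ => (hν i) (hP hp).2
  constructor
  · constructor
    · rintro ⟨_, hmax⟩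
      refine ⟨⟨hpstar, by simpa using hle pstar hpstar, by simp⟩, ?_⟩
      rintro ⟨t, p⟩ ⟨hpP, ht0, htle⟩
      simp only [key_rewrite]
      have h1 := hmax p hpP
      simp only at h1 ⊢
      linarith
    · rintro ⟨_, hmax⟩
      refine ⟨hpstar, ?_⟩
      intro p hpP
      have := hmax (∑ i : Fin K, ν i pmax - ∑ i : Fin K, ν i p, p)
        ⟨hpP, by simpa using hle p hpP, by simp⟩
      simp only [key_rewrite] at this
      simp only at this ⊢
      linarith
  · intro _
    rw [key_rewrite]
    ring
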